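/- Let F be a regular distribution on [0,∞) with strictly increasing w(v) = v - 1/h(v) and lim_{v→∞} w(v) > 0. Then for any γ > 1, for all sufficiently large v, γ·S(γv)/S(v) < 1, and consequently z_γ(v) = v - γS(γv)/f(v) > w(v) > 0 for large v. -/

import Mathlib

open Set Filter

/-- Let `F` be a regular distribution on `[0, ∞)` with `w v = v - 1/h v`
strictly increasing and `lim_{v→∞} w v > 0`. Then for any `γ > 1`, for all
sufficiently large `v`, `γ·S(γv)/S v < 1`, and consequently
`z_γ v = v - γ·S(γv)/f v > w v > 0` for large `v`. -/
theorem z_gamma_eventually_positive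
    (f S h : ℝ → ℝ)
    (hSderiv : ∀ v ∈ Ici (0 : ℝ), HasDerivAt S (-(f v)) v)
    (hfpos : ∀ v ∈ Ici (0 : ℝ), 0 < f v)
    (hSpos : ∀ v ∈ Ici (0 : ℝ), 0 < S v)
    (hh : ∀ v, h v = f v / S v)
    (hw : StrictMonoOn (fun v => v - 1 / h v) (Ici 0))
    (hlim : ∃ L, 0 < L ∧
      (Tendsto (fun v => v - 1 / h v) atTop (nhds L) ∨
        Tendsto (fun v => v - 1 / h v) atTop atTop))
    (γ : ℝ) (hγ : 1 < γ) :
    ∀ᶠ v in atTop,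
      γ * S (γ * v) / S v < 1 ∧
      v - γ * S (γ * v) / f v > v - 1 / h v ∧
      v - 1 / h v > 0 := by

  -- w v = v - 1/h v equals v - S v / f v on Ici 0
  have hwv_eq : ∀ v ∈ Ici (0:ℝ), v - 1 / h v = v - S v / f v := by
    intro v hv
    rw [hh, one_div_div]
  -- eventually 0 < w v
  have hw0 : ∀ᶠ v in atTop, 0 < v - 1 / h v := by
    obtain ⟨L, hL, hT | hT⟩ := hlim
    · exact hT.eventually (eventually_gt_nhds hL)
    · exact hT.eventually (eventually_gt_atTop 0)
  obtain ⟨v₁, hv₁⟩ := eventually_atTop.mp hw0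
  obtain ⟨v₀, hv₀def⟩ : ∃ v₀ : ℝ, v₀ = max v₁ 1 := ⟨_, rfl⟩
  have hv₀1 : (1:ℝ) ≤ v₀ := hv₀def ▸ le_max_right _ _
  have hv₀0 : (0:ℝ) ≤ v₀ := by linarith
  have hwv₀ : 0 < v₀ - 1 / h v₀ := hv₁ v₀ (hv₀def ▸ le_max_left _ _)
  obtain ⟨c, hcdef⟩ : ∃ c : ℝ, c = v₀ - 1 / h v₀ := ⟨_, rfl⟩
  have hc0 : 0 < c := hcdef ▸ hwv₀
  have hcv₀ : c < v₀ := by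
    have := hwv_eq v₀ hv₀0
    have hS := hSpos v₀ hv₀0
    have hf := hfpos v₀ hv₀0
    have : c = v₀ - S v₀ / f v₀ := by rw [hcdef, ← this]
    have hpos : 0 < S v₀ / f v₀ := div_pos hS hf
    linarith
  -- φ is strictly decreasing on [v₀, ∞)
  obtain ⟨φ, hφdef⟩ : ∃ φ : ℝ → ℝ, φ = fun v => S v * (v - c) := ⟨_, rfl⟩
  have hφderiv : ∀ x ∈ Ici v₀, HasDerivAt φ (-(f x) * (x - c) + S x) x := by
    intro x hx
    have hx0 : (0:ℝ) ≤ x := le_trans hv₀0 hx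
    have := (hSderiv x hx0).mul ((hasDerivAt_id x).sub_const c)
    rw [hφdef]
    have h2 : HasDerivAt (fun v => S v * (v - c)) _ x := this
    convert h2 using 1 <;> simp
  have hφanti : StrictAntiOn φ (Ici v₀) := by
    apply strictAntiOn_of_deriv_neg (convex_Ici v₀)
    · exact fun x hx => (hφderiv x hx).continuousAt.continuousWithinAt
    · intro x hx
      rw [interior_Ici] at hx
      have hx0 : (0:ℝ) ≤ x := le_trans hv₀0 (le_of_lt hx)
      rw [(hφderiv x (mem_Ici.mpr (le_of_lt hx))).deriv]
      have hwx : c < x - 1 / h x := hcdef ▸ hw hv₀0 hx0 hx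
      rw [hwv_eq x hx0] at hwx
      have hf := hfpos x hx0
      have : S x / f x < x - c := by linarith
      have := (div_lt_iff₀ hf).mp this
      nlinarith
  filter_upwards [eventually_ge_atTop v₀, hw0] with v hv hwv
  have hv0 : (0:ℝ) ≤ v := le_trans hv₀0 hv
  have hv1 : (1:ℝ) ≤ v := le_trans hv₀1 hv
  have hγv : v < γ * v := by nlinarith
  have hγv0 : (0:ℝ) ≤ γ * v := by linarith
  have key : φ (γ * v) < φ v :=
    hφanti (mem_Ici.mpr hv) (mem_Ici.mpr (le_trans hv (le_of_lt hγv))) hγv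
  have hSv := hSpos v hv0
  have hSγv := hSpos (γ * v) hγv0
  have hfv := hfpos v hv0
  have hcv : c < v := lt_of_lt_of_le hcv₀ hv
  have hcγv : c < γ * v := lt_trans hcv hγv
  have key2 : γ * S (γ * v) < S v := by
    have h1 : S (γ * v) * (γ * v - c) < S v * (v - c) := by rw [hφdef] at key; exact key
    have hγ0 : (0:ℝ) < γ := by linarith
    nlinarith [mul_lt_mul_of_pos_left h1 hγ0, sub_pos.mpr hcγv,
      mul_pos hSv (mul_pos (sub_pos.mpr hγ) hc0)]
  refine ⟨(div_lt_one hSv).mpr key2, ?_, hwv⟩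
  rw [hwv_eq v hv0]
  have : γ * S (γ * v) / f v < S v / f v := (div_lt_div_iff_of_pos_right hfv).mpr key2
  linarith
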